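/- For the concave function f(x) = -x log x on [0,1], for all x,y in [0,1], |f(x) - f(y)| ≤ f(|x-y|) + f(1-|x-y|). -/

import Mathlib

open Real

private lemma g_nonpos {a : ℝ} (h0 : 0 ≤ a) (h1 : a ≤ 1) : a * Real.log a ≤ 0 :=
  mul_nonpos_of_nonneg_of_nonpos h0 (Real.log_nonpos h0 h1)

/-- subadditivity: (a+b) log (a+b) ≥ a log a + b log b -/
private lemma g_superadd {a b : ℝ} (ha : 0 ≤ a) (hb : 0 ≤ b) :
    a * Real.log a + b * Real.log b ≤ (a + b) * Real.log (a + b) := by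
  have h1 : a * Real.log a ≤ a * Real.log (a + b) := by
    rcases eq_or_lt_of_le ha with h | h
    · simp [← h]
    · exact mul_le_mul_of_nonneg_left (Real.log_le_log h (by linarith)) ha
  have h2 : b * Real.log b ≤ b * Real.log (a + b) := by
    rcases eq_or_lt_of_le hb with h | h
    · simp [← h]
    · exact mul_le_mul_of_nonneg_left (Real.log_le_log h (by linarith)) hb
  nlinarith

/-- majorization step: g(y+t) + g(1-t) ≤ g(y) + g(1) = g(y). -/
private lemma g_major {y t : ℝ} (hy : 0 ≤ y) (ht : 0 ≤ t) (hyt : y + t ≤ 1) :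
    (y + t) * Real.log (y + t) + (1 - t) * Real.log (1 - t) ≤ y * Real.log y := by
  rcases eq_or_lt_of_le (show y ≤ 1 by linarith) with h1 | h1
  · have : t = 0 := by linarith
    subst h1; subst this; norm_num
  have hden : 0 < 1 - y := by linarith
  set l : ℝ := (1 - y - t) / (1 - y) with hl
  have hl0 : 0 ≤ l := div_nonneg (by linarith) (by linarith)
  have hl1 : l ≤ 1 := by
    rw [hl, div_le_one hden]; linarith
  have hsum : l + (1 - l) = 1 := by ring
  have key := Real.convexOn_mul_log
  have e1 : l * y + (1 - l) * 1 = y + t := by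
    have h' : l * (1 - y) = 1 - y - t := by rw [hl]; exact div_mul_cancel₀ _ hden.ne'
    linarith
  have e2 : (1 - l) * y + l * 1 = 1 - t := by
    have h' : l * (1 - y) = 1 - y - t := by rw [hl]; exact div_mul_cancel₀ _ hden.ne'
    linarith
  have c1 := key.2 (Set.mem_Ici.2 hy) (Set.mem_Ici.2 zero_le_one) hl0 (by linarith) hsum
  have c2 := key.2 (Set.mem_Ici.2 hy) (Set.mem_Ici.2 zero_le_one) (by linarith : (0:ℝ) ≤ 1 - l) hl0 (by ring)
  simp only [smul_eq_mul] at c1 c2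
  rw [e1] at c1
  rw [e2] at c2
  simp only [Real.log_one, mul_zero, mul_one] at c1 c2
  nlinarith

private lemma key_aux {x y : ℝ} (hy0 : 0 ≤ y) (hyx : y ≤ x) (hx1 : x ≤ 1) :
    |(-x * Real.log x) - (-y * Real.log y)| ≤
      (-(x - y) * Real.log (x - y)) + (-(1 - (x - y)) * Real.log (1 - (x - y))) := by
  set t : ℝ := x - y with htdef
  have ht0 : 0 ≤ t := by linarith
  have ht1 : t ≤ 1 := by linarith
  have hA : x * Real.log x ≥ y * Real.log y + t * Real.log t := by
    have := g_superadd hy0 ht0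
    have hxt : y + t = x := by ring
    rw [hxt] at this; linarith
  have hB := g_major hy0 ht0 (by linarith : y + t ≤ 1)
  have hxt : y + t = x := by ring
  rw [hxt] at hB
  have hft : t * Real.log t ≤ 0 := g_nonpos ht0 ht1
  have hf1t : (1 - t) * Real.log (1 - t) ≤ 0 := g_nonpos (by linarith) (by linarith)
  rw [abs_le]
  constructor <;> nlinarith

theorem stmt1 (x y : ℝ) (hx : x ∈ Set.Icc (0:ℝ) 1) (hy : y ∈ Set.Icc (0:ℝ) 1) :
    |(-x * Real.log x) - (-y * Real.log y)| ≤
      (-|x - y| * Real.log |x - y|) + (-(1 - |x - y|) * Real.log (1 - |x - y|)) := by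
  obtain ⟨hx0, hx1⟩ := hx
  obtain ⟨hy0, hy1⟩ := hy
  rcases le_total y x with h | h
  · rw [abs_of_nonneg (by linarith : (0:ℝ) ≤ x - y)]
    exact key_aux hy0 h hx1
  · rw [abs_sub_comm x y, abs_of_nonneg (by linarith : (0:ℝ) ≤ y - x), abs_sub_comm]
    exact key_aux hx0 h hy1
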